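/- arXiv:2003.09927 — 2 statements merged into one kernel-verified Lean document; each statement's English description precedes it below -/
import Mathlib

section
/- If Γ is a finite simplicial graph that is a tree on n vertices (n ≥ 1), then the Bestvina–Brady group H_Γ is isomorphic to the free group of rank n−1. -/
/-- The relator set of the right-angled Artin group of a simple graph:
commutators of adjacent vertices. -/
def raagRels {V : Type*} (G : SimpleGraph V) : Set (FreeGroup V) :=
  {r | ∃ v w : V, G.Adj v w ∧
    r = FreeGroup.of v * FreeGroup.of w * (FreeGroup.of v)⁻¹ * (FreeGroup.of w)⁻¹}

/-- The right-angled Artin group of a simple graph. -/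
abbrev RAAG {V : Type*} (G : SimpleGraph V) : Type _ := PresentedGroup (raagRels G)

/-- The homomorphism `A_Γ → ℤ` sending every vertex generator to `1`. -/
def bbHom {V : Type*} (G : SimpleGraph V) : RAAG G →* Multiplicative ℤ :=
  PresentedGroup.toGroup (f := fun _ : V => Multiplicative.ofAdd (1 : ℤ)) (by
    rintro r ⟨v, w, -, rfl⟩
    simp [mul_comm])

namespace BBaux

open SimpleGraph Walk Multiplicative

variable {V : Type*} (G : SimpleGraph V)

noncomputable def P (hT : G.IsTree) (v0 v : V) : G.Walk v v0 :=
  (hT.existsUnique_path v v0).choose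

lemma P_isPath (hT : G.IsTree) (v0 v : V) : (P G hT v0 v).IsPath :=
  (hT.existsUnique_path v v0).choose_spec.1

lemma P_unique (hT : G.IsTree) (v0 : V) {v : V} (q : G.Walk v v0) (hq : q.IsPath) :
    q = P G hT v0 v :=
  (hT.existsUnique_path v v0).choose_spec.2 q hq

noncomputable def par (hT : G.IsTree) (v0 v : V) : V := (P G hT v0 v).getVert 1

noncomputable def depth (hT : G.IsTree) (v0 v : V) : ℕ := (P G hT v0 v).length

variable (hT : G.IsTree) (v0 : V)

lemma P_nil : P G hT v0 v0 = Walk.nil :=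
  (P_unique G hT v0 Walk.nil IsPath.nil).symm

lemma par_v0 : par G hT v0 v0 = v0 := by
  rw [par, P_nil]
  rfl

lemma adj_par {v : V} (h : v ≠ v0) : G.Adj v (par G hT v0 v) :=
  Walk.adj_snd (p := P G hT v0 v) (Walk.not_nil_of_ne h)

lemma P_tail {v : V} (h : v ≠ v0) :
    (P G hT v0 v).tail = P G hT v0 (par G hT v0 v) :=
  P_unique G hT v0 _ ((P_isPath G hT v0 v).tail)

lemma P_cons {v : V} (h : v ≠ v0) :
    P G hT v0 v = Walk.cons (adj_par G hT v0 h) (P G hT v0 (par G hT v0 v)) := by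
  conv_lhs => rw [← Walk.cons_tail_eq (P G hT v0 v) (Walk.not_nil_of_ne h)]
  rw [P_tail G hT v0 h]
  rfl

lemma depth_v0 : depth G hT v0 v0 = 0 := by rw [depth, P_nil]; rfl

lemma depth_pos {v : V} (h : v ≠ v0) : 0 < depth G hT v0 v :=
  Walk.not_nil_iff_lt_length.mp (Walk.not_nil_of_ne h)

lemma eq_of_depth_eq_zero {v : V} (h : depth G hT v0 v = 0) : v = v0 := by
  by_contra hv
  exact absurd h (depth_pos G hT v0 hv).ne'

lemma depth_par {v : V} (h : v ≠ v0) :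
    depth G hT v0 (par G hT v0 v) + 1 = depth G hT v0 v := by
  conv_rhs => rw [depth, P_cons G hT v0 h]
  simp [depth]

lemma adj_cases {v w : V} (h : G.Adj v w) :
    par G hT v0 v = w ∨ par G hT v0 w = v := by
  classical
  by_cases hv : v ∈ (P G hT v0 w).support
  · right
    have hq : ((P G hT v0 w).takeUntil v hv).IsPath :=
      (P_isPath G hT v0 w).takeUntil hv
    have hsingle : Walk.cons h.symm Walk.nil = (P G hT v0 w).takeUntil v hv := by
      refine (hT.existsUnique_path w v).unique ?_ hq
      · simp [Walk.cons_isPath_iff, Walk.IsPath.nil, h.ne']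
    have hspec := (P G hT v0 w).take_spec hv
    rw [← hsingle] at hspec
    rw [par, ← hspec]
    simp [Walk.cons_append, Walk.nil_append, Walk.getVert_cons_succ, Walk.getVert_zero]
  · left
    have : Walk.cons h (P G hT v0 w) = P G hT v0 v :=
      P_unique G hT v0 _ ((P_isPath G hT v0 w).cons hv)
    rw [par, ← this]
    simp [Walk.getVert_cons_succ, Walk.getVert_zero]


section FG

variable [DecidableEq V]

/-- fuel-based path word `v ↦ e_v e_{p v} ⋯` -/
noncomputable def iot (hT : G.IsTree) (v0 : V) : ℕ → V → FreeGroup {u : V // u ≠ v0}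
  | 0, _ => 1
  | (k+1), v =>
    if h : v = v0 then 1 else FreeGroup.of ⟨v, h⟩ * iot hT v0 k (par G hT v0 v)

noncomputable def kap (hT : G.IsTree) (v0 : V) : ℕ → V → FreeGroup {u : V // u ≠ v0}
  | 0, _ => 1
  | (k+1), v =>
    if h : v = v0 then 1 else kap hT v0 k (par G hT v0 v) * FreeGroup.of ⟨v, h⟩

noncomputable def iota (hT : G.IsTree) (v0 v : V) : FreeGroup {u : V // u ≠ v0} :=
  iot G hT v0 (depth G hT v0 v + 1) v

noncomputable def kappa (hT : G.IsTree) (v0 v : V) : FreeGroup {u : V // u ≠ v0} :=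
  kap G hT v0 (depth G hT v0 v + 1) v

lemma iot_stable (hT : G.IsTree) (v0 : V) :
    ∀ (k : ℕ) (v : V), depth G hT v0 v < k → iot G hT v0 k v = iota G hT v0 v := by
  intro k
  induction k with
  | zero => exact fun v h => absurd h (Nat.not_lt_zero _)
  | succ k ih =>
    intro v hv
    by_cases h : v = v0
    · subst h; simp [iot, iota]
    · have hd := depth_par G hT v0 h
      have h2 : iota G hT v0 v
          = FreeGroup.of ⟨v, h⟩ * iot G hT v0 (depth G hT v0 v) (par G hT v0 v) := by
        rw [iota]; rw [iot]; rw [dif_neg h]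
      rw [iot, dif_neg h, h2, ← hd]
      rw [ih _ (by omega), iota]

lemma kap_stable (hT : G.IsTree) (v0 : V) :
    ∀ (k : ℕ) (v : V), depth G hT v0 v < k → kap G hT v0 k v = kappa G hT v0 v := by
  intro k
  induction k with
  | zero => exact fun v h => absurd h (Nat.not_lt_zero _)
  | succ k ih =>
    intro v hv
    by_cases h : v = v0
    · subst h; simp [kap, kappa]
    · have hd := depth_par G hT v0 h
      have h2 : kappa G hT v0 v
          = kap G hT v0 (depth G hT v0 v) (par G hT v0 v) * FreeGroup.of ⟨v, h⟩ := by
        rw [kappa]; rw [kap]; rw [dif_neg h]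
      rw [kap, dif_neg h, h2, ← hd]
      rw [ih _ (by omega), kappa]

variable (hT : G.IsTree) (v0 : V)

lemma iota_v0 : iota G hT v0 v0 = 1 := by rw [iota, iot, dif_pos rfl]

lemma kappa_v0 : kappa G hT v0 v0 = 1 := by rw [kappa, kap, dif_pos rfl]

lemma iota_spec {v : V} (h : v ≠ v0) :
    iota G hT v0 v = FreeGroup.of ⟨v, h⟩ * iota G hT v0 (par G hT v0 v) := by
  have hd := depth_par G hT v0 h
  rw [iota, iot, dif_neg h, iot_stable G hT v0 _ _ (by omega)]

lemma kappa_spec {v : V} (h : v ≠ v0) :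
    kappa G hT v0 v = kappa G hT v0 (par G hT v0 v) * FreeGroup.of ⟨v, h⟩ := by
  have hd := depth_par G hT v0 h
  rw [kappa, kap, dif_neg h, kap_stable G hT v0 _ _ (by omega)]

/-- the conjugating endomorphism -/
noncomputable def phif : FreeGroup {u : V // u ≠ v0} →* FreeGroup {u : V // u ≠ v0} :=
  FreeGroup.lift fun x =>
    (iota G hT v0 (par G hT v0 x.1))⁻¹ * FreeGroup.of x * iota G hT v0 (par G hT v0 x.1)

noncomputable def psif : FreeGroup {u : V // u ≠ v0} →* FreeGroup {u : V // u ≠ v0} :=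
  FreeGroup.lift fun x =>
    kappa G hT v0 (par G hT v0 x.1) * FreeGroup.of x * (kappa G hT v0 (par G hT v0 x.1))⁻¹

lemma psif_iota (v : V) : psif G hT v0 (iota G hT v0 v) = kappa G hT v0 v := by
  obtain ⟨k, hk⟩ : ∃ k, depth G hT v0 v ≤ k := ⟨_, le_refl _⟩
  induction k generalizing v with
  | zero =>
    have hv := eq_of_depth_eq_zero G hT v0 (Nat.le_zero.mp hk)
    subst hv; rw [iota_v0, map_one, kappa_v0]
  | succ k ih =>
    by_cases h : v = v0
    · subst h; rw [iota_v0, map_one, kappa_v0]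
    · have hd := depth_par G hT v0 h
      rw [iota_spec G hT v0 h, map_mul, ih _ (by omega), kappa_spec G hT v0 h]
      rw [psif, FreeGroup.lift_apply_of]
      simp [mul_assoc]

lemma phif_kappa (v : V) : phif G hT v0 (kappa G hT v0 v) = iota G hT v0 v := by
  obtain ⟨k, hk⟩ : ∃ k, depth G hT v0 v ≤ k := ⟨_, le_refl _⟩
  induction k generalizing v with
  | zero =>
    have hv := eq_of_depth_eq_zero G hT v0 (Nat.le_zero.mp hk)
    subst hv; rw [kappa_v0, map_one, iota_v0]
  | succ k ih =>
    by_cases h : v = v0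
    · subst h; rw [kappa_v0, map_one, iota_v0]
    · have hd := depth_par G hT v0 h
      rw [kappa_spec G hT v0 h, map_mul, ih _ (by omega), iota_spec G hT v0 h]
      rw [phif, FreeGroup.lift_apply_of]
      simp [mul_assoc]

lemma psif_phif : (psif G hT v0).comp (phif G hT v0) = MonoidHom.id _ := by
  refine FreeGroup.ext_hom _ _ fun x => ?_
  simp only [MonoidHom.comp_apply, MonoidHom.id_apply]
  rw [phif, FreeGroup.lift_apply_of, map_mul, map_mul, map_inv, psif_iota]
  rw [psif, FreeGroup.lift_apply_of]
  simp [mul_assoc]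

lemma phif_psif : (phif G hT v0).comp (psif G hT v0) = MonoidHom.id _ := by
  refine FreeGroup.ext_hom _ _ fun x => ?_
  simp only [MonoidHom.comp_apply, MonoidHom.id_apply]
  rw [psif, FreeGroup.lift_apply_of, map_mul, map_mul, map_inv, phif_kappa]
  rw [phif, FreeGroup.lift_apply_of]
  simp [mul_assoc]

/-- the automorphism of the free group corresponding to conjugation by the root -/
noncomputable def phiE : FreeGroup {u : V // u ≠ v0} ≃* FreeGroup {u : V // u ≠ v0} :=
  MonoidHom.toMulEquiv (phif G hT v0) (psif G hT v0) (psif_phif G hT v0) (phif_psif G hT v0)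

lemma phiE_apply (x : FreeGroup {u : V // u ≠ v0}) : phiE G hT v0 x = phif G hT v0 x := rfl

lemma phiE_symm_apply (x : FreeGroup {u : V // u ≠ v0}) :
    (phiE G hT v0).symm x = psif G hT v0 x := rfl

end FG


section SDP

variable [DecidableEq V] (hT : G.IsTree) (v0 : V)

lemma phif_of {v : V} (h : v ≠ v0) :
    phif G hT v0 (FreeGroup.of ⟨v, h⟩)
      = (iota G hT v0 (par G hT v0 v))⁻¹ * FreeGroup.of ⟨v, h⟩ * iota G hT v0 (par G hT v0 v) :=
  FreeGroup.lift_apply_of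

lemma comm_step {v : V} (h : v ≠ v0) :
    iota G hT v0 v * phif G hT v0 (iota G hT v0 (par G hT v0 v))
      = iota G hT v0 (par G hT v0 v) * phif G hT v0 (iota G hT v0 v) := by
  conv_lhs => rw [iota_spec G hT v0 h]
  conv_rhs => rw [iota_spec G hT v0 h]
  rw [map_mul, phif_of G hT v0 h]
  simp [mul_assoc]

lemma comm_adj {v w : V} (h : G.Adj v w) :
    iota G hT v0 v * phif G hT v0 (iota G hT v0 w)
      = iota G hT v0 w * phif G hT v0 (iota G hT v0 v) := by
  rcases adj_cases G hT v0 h with hp | hp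
  · have hv : v ≠ v0 := by
      rintro rfl
      rw [par_v0] at hp
      exact h.ne hp
    rw [← hp]
    exact comm_step G hT v0 hv
  · have hw : w ≠ v0 := by
      rintro rfl
      rw [par_v0] at hp
      exact h.ne hp.symm
    rw [← hp]
    exact (comm_step G hT v0 hw).symm

/-- the ℤ-action on the free group -/
noncomputable def phiz : Multiplicative ℤ →* MulAut (FreeGroup {u : V // u ≠ v0}) :=
  zpowersHom _ (phiE G hT v0)

lemma phiz_apply (z : Multiplicative ℤ) :
    phiz G hT v0 z = phiE G hT v0 ^ z.toAdd := rfl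

/-- the map from the RAAG to the semidirect product -/
noncomputable def Theta :
    RAAG G →* (FreeGroup {u : V // u ≠ v0}) ⋊[phiz G hT v0] Multiplicative ℤ :=
  PresentedGroup.toGroup
    (f := fun v => ⟨iota G hT v0 v, Multiplicative.ofAdd 1⟩) (by
      rintro r ⟨v, w, hadj, rfl⟩
      simp only [map_mul, map_inv, FreeGroup.lift_apply_of]
      have key : (⟨iota G hT v0 v, Multiplicative.ofAdd 1⟩ :
            (FreeGroup {u : V // u ≠ v0}) ⋊[phiz G hT v0] Multiplicative ℤ)
            * ⟨iota G hT v0 w, Multiplicative.ofAdd 1⟩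
          = ⟨iota G hT v0 w, Multiplicative.ofAdd 1⟩ * ⟨iota G hT v0 v, Multiplicative.ofAdd 1⟩ := by
        ext
        · show iota G hT v0 v * phiz G hT v0 (Multiplicative.ofAdd 1) (iota G hT v0 w)
            = iota G hT v0 w * phiz G hT v0 (Multiplicative.ofAdd 1) (iota G hT v0 v)
          rw [phiz_apply, toAdd_ofAdd, zpow_one]
          exact comm_adj G hT v0 hadj
        · rfl
      rw [key]
      simp [mul_assoc])

lemma Theta_of (v : V) :
    Theta G hT v0 (PresentedGroup.of v)
      = (⟨iota G hT v0 v, Multiplicative.ofAdd 1⟩ :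
          (FreeGroup {u : V // u ≠ v0}) ⋊[phiz G hT v0] Multiplicative ℤ) :=
  PresentedGroup.toGroup.of _

lemma raag_comm {v w : V} (h : G.Adj v w) :
    Commute (PresentedGroup.of (rels := raagRels G) v) (PresentedGroup.of w) := by
  have h1 : PresentedGroup.mk (raagRels G)
      (FreeGroup.of v * FreeGroup.of w * (FreeGroup.of v)⁻¹ * (FreeGroup.of w)⁻¹) = 1 := by
    apply (QuotientGroup.eq_one_iff _).mpr
    exact Subgroup.subset_normalClosure ⟨v, w, h, rfl⟩
  rw [map_mul, map_mul, map_inv, map_inv] at h1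
  have e1 := mul_inv_eq_one.mp h1
  have e2 := mul_inv_eq_iff_eq_mul.mp e1
  exact e2

/-- the free-group half of the inverse map -/
noncomputable def f1 : FreeGroup {u : V // u ≠ v0} →* RAAG G :=
  FreeGroup.lift fun x =>
    PresentedGroup.of x.1 * (PresentedGroup.of (rels := raagRels G) (par G hT v0 x.1))⁻¹

/-- the ℤ half of the inverse map -/
noncomputable def f2 : Multiplicative ℤ →* RAAG G :=
  zpowersHom _ (PresentedGroup.of (rels := raagRels G) v0)

lemma f2_apply (z : Multiplicative ℤ) :
    f2 G v0 z = PresentedGroup.of (rels := raagRels G) v0 ^ z.toAdd := rfl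

lemma f1_of {v : V} (h : v ≠ v0) :
    f1 G hT v0 (FreeGroup.of ⟨v, h⟩)
      = PresentedGroup.of v * (PresentedGroup.of (rels := raagRels G) (par G hT v0 v))⁻¹ :=
  FreeGroup.lift_apply_of

lemma f1_iota (u : V) :
    f1 G hT v0 (iota G hT v0 u)
      = PresentedGroup.of u * (PresentedGroup.of (rels := raagRels G) v0)⁻¹ := by
  obtain ⟨k, hk⟩ : ∃ k, depth G hT v0 u ≤ k := ⟨_, le_refl _⟩
  induction k generalizing u with
  | zero =>
    have hv := eq_of_depth_eq_zero G hT v0 (Nat.le_zero.mp hk)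
    subst hv
    rw [iota_v0, map_one, mul_inv_cancel]
  | succ k ih =>
    by_cases h : u = v0
    · subst h; rw [iota_v0, map_one, mul_inv_cancel]
    · have hd := depth_par G hT v0 h
      rw [iota_spec G hT v0 h, map_mul, ih _ (by omega), f1_of G hT v0 h]
      simp [mul_assoc]

lemma f1_phif_comp :
    (f1 G hT v0).comp (phif G hT v0)
      = (MulAut.conj (PresentedGroup.of (rels := raagRels G) v0)).toMonoidHom.comp (f1 G hT v0) := by
  refine FreeGroup.ext_hom _ _ fun x => ?_
  obtain ⟨v, hv⟩ := x
  simp only [MonoidHom.comp_apply, MulEquiv.coe_toMonoidHom, MulAut.conj_apply]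
  rw [phif_of G hT v0 hv, map_mul, map_mul, map_inv, f1_iota, f1_of G hT v0 hv]
  have hc := ((raag_comm G (adj_par G hT v0 hv)).inv_right).eq
  simp only [mul_inv_rev, inv_inv, mul_assoc, inv_mul_cancel_left]
  rw [← mul_assoc (PresentedGroup.of (par G hT v0 v))⁻¹, ← hc]
  simp [mul_assoc]

lemma f1_phif (g : FreeGroup {u : V // u ≠ v0}) :
    f1 G hT v0 (phif G hT v0 g)
      = PresentedGroup.of (rels := raagRels G) v0 * f1 G hT v0 g
          * (PresentedGroup.of (rels := raagRels G) v0)⁻¹ :=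
  DFunLike.congr_fun (f1_phif_comp G hT v0) g

lemma phif_psif_apply (g : FreeGroup {u : V // u ≠ v0}) :
    phif G hT v0 (psif G hT v0 g) = g :=
  DFunLike.congr_fun (phif_psif G hT v0) g

lemma psif_phif_apply (g : FreeGroup {u : V // u ≠ v0}) :
    psif G hT v0 (phif G hT v0 g) = g :=
  DFunLike.congr_fun (psif_phif G hT v0) g

lemma f1_psif (g : FreeGroup {u : V // u ≠ v0}) :
    f1 G hT v0 (psif G hT v0 g)
      = (PresentedGroup.of (rels := raagRels G) v0)⁻¹ * f1 G hT v0 g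
          * PresentedGroup.of (rels := raagRels G) v0 := by
  have := f1_phif G hT v0 (psif G hT v0 g)
  rw [phif_psif_apply] at this
  rw [this]
  simp [mul_assoc]

lemma f1_zpow (k : ℤ) :
    ∀ g : FreeGroup {u : V // u ≠ v0},
      f1 G hT v0 ((phiE G hT v0 ^ k) g)
        = (PresentedGroup.of (rels := raagRels G) v0) ^ k * f1 G hT v0 g
            * ((PresentedGroup.of (rels := raagRels G) v0) ^ k)⁻¹ := by
  induction k using Int.induction_on with
  | zero => intro g; simp
  | succ k ih =>
    intro g
    rw [zpow_add_one, MulAut.mul_apply,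
      show (phiE G hT v0) g = phif G hT v0 g from rfl,
      ih (phif G hT v0 g), f1_phif]
    group
  | pred k ih =>
    intro g
    rw [zpow_sub_one, MulAut.mul_apply,
      show (phiE G hT v0)⁻¹ g = psif G hT v0 g from rfl,
      ih (psif G hT v0 g), f1_psif]
    group

lemma hlift (z : Multiplicative ℤ) :
    (f1 G hT v0).comp ((phiz G hT v0 z).toMonoidHom)
      = (MulAut.conj (f2 G v0 z)).toMonoidHom.comp (f1 G hT v0) := by
  refine MonoidHom.ext fun g => ?_
  simp only [MonoidHom.comp_apply, MulEquiv.coe_toMonoidHom, MulAut.conj_apply]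
  rw [phiz_apply, f2_apply]
  exact f1_zpow G hT v0 z.toAdd g

/-- the map from the semidirect product to the RAAG -/
noncomputable def Xi :
    (FreeGroup {u : V // u ≠ v0}) ⋊[phiz G hT v0] Multiplicative ℤ →* RAAG G :=
  SemidirectProduct.lift (f1 G hT v0) (f2 G v0) (hlift G hT v0)

lemma Xi_Theta : (Xi G hT v0).comp (Theta G hT v0) = MonoidHom.id (RAAG G) := by
  refine PresentedGroup.ext fun x => ?_
  rw [MonoidHom.comp_apply, MonoidHom.id_apply, Theta_of,
    SemidirectProduct.mk_eq_inl_mul_inr, map_mul, Xi,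
    SemidirectProduct.lift_inl, SemidirectProduct.lift_inr, f1_iota,
    f2_apply, toAdd_ofAdd, zpow_one]
  simp [mul_assoc]

lemma Theta_Xi :
    (Theta G hT v0).comp (Xi G hT v0)
      = MonoidHom.id ((FreeGroup {u : V // u ≠ v0}) ⋊[phiz G hT v0] Multiplicative ℤ) := by
  refine SemidirectProduct.hom_ext ?_ ?_
  · refine FreeGroup.ext_hom _ _ fun x => ?_
    obtain ⟨v, hv⟩ := x
    simp only [MonoidHom.comp_apply, MonoidHom.id_apply]
    rw [Xi, SemidirectProduct.lift_inl, f1_of G hT v0 hv, map_mul, map_inv,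
      Theta_of, Theta_of]
    ext
    · show iota G hT v0 v * phiz G hT v0 (Multiplicative.ofAdd 1)
          ((⟨iota G hT v0 (par G hT v0 v), Multiplicative.ofAdd 1⟩ :
            (FreeGroup {u : V // u ≠ v0}) ⋊[phiz G hT v0] Multiplicative ℤ)⁻¹).left
        = (SemidirectProduct.inl (FreeGroup.of ⟨v, hv⟩)).left
      rw [SemidirectProduct.inv_left, SemidirectProduct.left_inl]
      show iota G hT v0 v
          * phiz G hT v0 (Multiplicative.ofAdd 1)
            (phiz G hT v0 (Multiplicative.ofAdd 1)⁻¹ (iota G hT v0 (par G hT v0 v))⁻¹)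
        = FreeGroup.of ⟨v, hv⟩
      rw [← MulAut.mul_apply, ← map_mul, mul_inv_cancel, map_one, MulAut.one_apply]
      rw [iota_spec G hT v0 hv]
      simp [mul_assoc]
    · rfl
  · refine MonoidHom.ext_mint ?_
    simp only [MonoidHom.comp_apply, MonoidHom.id_apply]
    rw [Xi, SemidirectProduct.lift_inr, f2_apply, toAdd_ofAdd, zpow_one, Theta_of]
    ext
    · show iota G hT v0 v0 = (SemidirectProduct.inr (Multiplicative.ofAdd 1)).left
      rw [iota_v0, SemidirectProduct.left_inr]
    · rfl

/-- the RAAG of a tree is a semidirect product of a free group and ℤ -/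
noncomputable def raagIso :
    RAAG G ≃* (FreeGroup {u : V // u ≠ v0}) ⋊[phiz G hT v0] Multiplicative ℤ :=
  MonoidHom.toMulEquiv (Theta G hT v0) (Xi G hT v0) (Xi_Theta G hT v0) (Theta_Xi G hT v0)

lemma bbHom_eq :
    bbHom G = SemidirectProduct.rightHom.comp (Theta G hT v0) := by
  refine PresentedGroup.ext fun x => ?_
  rw [MonoidHom.comp_apply, Theta_of]
  rw [bbHom, PresentedGroup.toGroup.of]
  rfl

lemma ker_map :
    ((bbHom G).ker.map (raagIso G hT v0 : RAAG G →* _))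
      = (SemidirectProduct.rightHom :
          (FreeGroup {u : V // u ≠ v0}) ⋊[phiz G hT v0] Multiplicative ℤ →* Multiplicative ℤ).ker := by
  ext x
  simp only [Subgroup.mem_map, MonoidHom.mem_ker]
  constructor
  · rintro ⟨y, hy, rfl⟩
    rw [show ((raagIso G hT v0 : RAAG G →* _) y) = Theta G hT v0 y from rfl,
      ← MonoidHom.comp_apply, ← bbHom_eq G hT v0]
    exact hy
  · intro hx
    refine ⟨Xi G hT v0 x, ?_, ?_⟩
    · rw [bbHom_eq G hT v0, MonoidHom.comp_apply,
        show Theta G hT v0 (Xi G hT v0 x) = x from DFunLike.congr_fun (Theta_Xi G hT v0) x]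
      exact hx
    · exact DFunLike.congr_fun (Theta_Xi G hT v0) x

/-- the kernel of the Bestvina–Brady map is free -/
noncomputable def kerIso :
    (bbHom G).ker ≃* FreeGroup {u : V // u ≠ v0} :=
  ((MulEquiv.subgroupMap (raagIso G hT v0) (bbHom G).ker).trans
    (MulEquiv.subgroupCongr (ker_map G hT v0))).trans
    (((MonoidHom.ofInjective (SemidirectProduct.inl_injective
        (φ := phiz G hT v0))).trans
      (MulEquiv.subgroupCongr (SemidirectProduct.range_inl_eq_ker_rightHom))).symm)

end SDP

end BBaux

/-- If `Γ` is a tree on `n ≥ 1` vertices, then the Bestvina–Brady group `H_Γ` is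
isomorphic to the free group of rank `n - 1`. -/
theorem bb_of_tree_iso_freeGroup {V : Type*} [Fintype V] (G : SimpleGraph V)
    (hT : G.IsTree) (n : ℕ) (hn : 1 ≤ n) (hcard : Fintype.card V = n) :
    Nonempty ((bbHom G).ker ≃* FreeGroup (Fin (n - 1))) := by
  classical
  have hpos : 0 < Fintype.card V := by omega
  obtain ⟨v0⟩ := Fintype.card_pos_iff.mp hpos
  have hcard' : Fintype.card {u : V // u ≠ v0} = n - 1 := by
    have h1 : Fintype.card {u : V // ¬ u = v0} = Fintype.card V - Fintype.card {u : V // u = v0} :=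
      Fintype.card_subtype_compl _
    rw [Fintype.card_subtype_eq] at h1
    calc Fintype.card {u : V // u ≠ v0} = Fintype.card {u : V // ¬ u = v0} := rfl
    _ = n - 1 := by rw [h1, hcard]
  exact ⟨(BBaux.kerIso G hT v0).trans
    (FreeGroup.freeGroupCongr (Fintype.equivFinOfCardEq hcard'))⟩
end

section
/- Let Γ be a finite simplicial connected graph with a cut-vertex v, so that the vertex set of Γ∖{v} is the disjoint union of two nonempty sets V₁ and V₂ with no edges of Γ joining V₁ to V₂. Let Γ₁ and Γ₂ be the induced subgraphs of Γ on V₁ ∪ {v} and V₂ ∪ {v}, respectively. Then the Bestvina–Brady group H_Γ is isomorphic to the free product H_{Γ₁} ∗ H_{Γ₂}. -/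
open Monoid Multiplicative

section Graph
variable {V : Type*} (G : SimpleGraph V)

lemma raag_adj_comm {a b : V} (h : G.Adj a b) :
    (PresentedGroup.of a : RAAG G) * PresentedGroup.of b
      = PresentedGroup.of b * PresentedGroup.of a := by
  have h1 : ((QuotientGroup.mk (FreeGroup.of a * FreeGroup.of b * (FreeGroup.of a)⁻¹ *
      (FreeGroup.of b)⁻¹)) : PresentedGroup (raagRels G)) = 1 :=
    (QuotientGroup.eq_one_iff _).mpr
      (Subgroup.subset_normalClosure ⟨a, b, h, rfl⟩)
  have h2 : (PresentedGroup.of a : RAAG G) * PresentedGroup.of b *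
      (PresentedGroup.of a : RAAG G)⁻¹ * (PresentedGroup.of b)⁻¹ = 1 := h1
  rw [mul_inv_eq_one, mul_inv_eq_iff_eq_mul] at h2
  exact h2

lemma bbHom_of (u : V) : bbHom G (PresentedGroup.of u) = ofAdd (1:ℤ) :=
  PresentedGroup.toGroup.of _

variable (S : Set V)

/-- Inclusion of the RAAG of an induced subgraph into the ambient RAAG. -/
def iotaS : RAAG (G.induce S) →* RAAG G :=
  PresentedGroup.toGroup (f := fun x : S => (PresentedGroup.of (x : V) : RAAG G)) (by
    rintro r ⟨a, b, hab, rfl⟩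
    have h : G.Adj ↑a ↑b := hab
    simp only [map_mul, map_inv, FreeGroup.lift_apply_of]
    rw [mul_inv_eq_one, mul_inv_eq_iff_eq_mul]
    exact raag_adj_comm G h)

lemma iotaS_of (x : S) : iotaS G S (PresentedGroup.of x) = PresentedGroup.of (x : V) :=
  PresentedGroup.toGroup.of _

lemma bbHom_comp_iotaS : (bbHom G).comp (iotaS G S) = bbHom (G.induce S) :=
  PresentedGroup.ext fun x => by
    rw [MonoidHom.comp_apply, iotaS_of, bbHom_of, bbHom_of]

end Graph


section Generic
variable {A₁ A₂ : Type*} [Group A₁] [Group A₂]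
  (φ₁ : A₁ →* Multiplicative ℤ) (φ₂ : A₂ →* Multiplicative ℤ) (w₁ : A₁) (w₂ : A₂)

lemma conj_mem_ker {A T : Type*} [Group A] [Group T] (f : A →* T) (w : A) {x : A}
    (hx : x ∈ f.ker) : w * x * w⁻¹ ∈ f.ker := by
  simp only [MonoidHom.mem_ker] at hx ⊢
  simp [map_mul, hx]

/-- conjugation by `w₁, w₂` as an automorphism of `ker φ₁ ∗ ker φ₂`. -/
def bbAut : MulAut (Coprod φ₁.ker φ₂.ker) :=
  MulEquiv.coprodCongr (MulAut.conjNormal w₁) (MulAut.conjNormal w₂)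

lemma bbAut_inl (k : φ₁.ker) : bbAut φ₁ φ₂ w₁ w₂ (Coprod.inl k) =
    Coprod.inl ⟨w₁ * k * w₁⁻¹, conj_mem_ker φ₁ w₁ k.2⟩ :=
  rfl

lemma bbAut_inr (k : φ₂.ker) : bbAut φ₁ φ₂ w₁ w₂ (Coprod.inr k) =
    Coprod.inr ⟨w₂ * k * w₂⁻¹, conj_mem_ker φ₂ w₂ k.2⟩ :=
  rfl

lemma bbAut_inv_inl (k : φ₁.ker) : (bbAut φ₁ φ₂ w₁ w₂)⁻¹ (Coprod.inl k) =
    Coprod.inl ⟨w₁⁻¹ * k * w₁, by simpa using conj_mem_ker φ₁ w₁⁻¹ k.2⟩ := by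
  show Coprod.inl ((MulAut.conjNormal w₁)⁻¹ k) = _
  rw [← map_inv]
  congr 1
  ext
  simpa using MulAut.conjNormal_apply w₁⁻¹ k

lemma bbAut_inv_inr (k : φ₂.ker) : (bbAut φ₁ φ₂ w₁ w₂)⁻¹ (Coprod.inr k) =
    Coprod.inr ⟨w₂⁻¹ * k * w₂, by simpa using conj_mem_ker φ₂ w₂⁻¹ k.2⟩ := by
  show Coprod.inr ((MulAut.conjNormal w₂)⁻¹ k) = _
  rw [← map_inv]
  congr 1
  ext
  simpa using MulAut.conjNormal_apply w₂⁻¹ k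

lemma bbAut_zpow_inl (n : ℤ) (k : φ₁.ker) :
    ((bbAut φ₁ φ₂ w₁ w₂) ^ n) (Coprod.inl k) =
      Coprod.inl ⟨w₁ ^ n * k * (w₁ ^ n)⁻¹, conj_mem_ker φ₁ (w₁ ^ n) k.2⟩ := by
  induction n using Int.induction_on generalizing k with
  | zero => simp
  | succ n ih =>
      rw [zpow_add_one, MulAut.mul_def]
      show (bbAut φ₁ φ₂ w₁ w₂ ^ (n:ℤ)) ((bbAut φ₁ φ₂ w₁ w₂) (Coprod.inl k)) = _
      rw [bbAut_inl, ih]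
      congr 1
      ext
      show w₁ ^ (n:ℤ) * (w₁ * ↑k * w₁⁻¹) * (w₁ ^ (n:ℤ))⁻¹ = w₁ ^ ((n:ℤ)+1) * ↑k * (w₁ ^ ((n:ℤ)+1))⁻¹
      group
  | pred n ih =>
      rw [sub_eq_add_neg, zpow_add, zpow_neg_one, MulAut.mul_def]
      show (bbAut φ₁ φ₂ w₁ w₂ ^ (-(n:ℤ))) ((bbAut φ₁ φ₂ w₁ w₂)⁻¹ (Coprod.inl k)) = _
      rw [bbAut_inv_inl, ih]
      congr 1
      ext
      show w₁ ^ (-(n:ℤ)) * (w₁⁻¹ * ↑k * w₁) * (w₁ ^ (-(n:ℤ)))⁻¹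
          = w₁ ^ (-(n:ℤ)+-1) * ↑k * (w₁ ^ (-(n:ℤ)+-1))⁻¹
      group

lemma bbAut_zpow_inr (n : ℤ) (k : φ₂.ker) :
    ((bbAut φ₁ φ₂ w₁ w₂) ^ n) (Coprod.inr k) =
      Coprod.inr ⟨w₂ ^ n * k * (w₂ ^ n)⁻¹, conj_mem_ker φ₂ (w₂ ^ n) k.2⟩ := by
  induction n using Int.induction_on generalizing k with
  | zero => simp
  | succ n ih =>
      rw [zpow_add_one, MulAut.mul_def]
      show (bbAut φ₁ φ₂ w₁ w₂ ^ (n:ℤ)) ((bbAut φ₁ φ₂ w₁ w₂) (Coprod.inr k)) = _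
      rw [bbAut_inr, ih]
      congr 1
      ext
      show w₂ ^ (n:ℤ) * (w₂ * ↑k * w₂⁻¹) * (w₂ ^ (n:ℤ))⁻¹ = w₂ ^ ((n:ℤ)+1) * ↑k * (w₂ ^ ((n:ℤ)+1))⁻¹
      group
  | pred n ih =>
      rw [sub_eq_add_neg, zpow_add, zpow_neg_one, MulAut.mul_def]
      show (bbAut φ₁ φ₂ w₁ w₂ ^ (-(n:ℤ))) ((bbAut φ₁ φ₂ w₁ w₂)⁻¹ (Coprod.inr k)) = _
      rw [bbAut_inv_inr, ih]
      congr 1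
      ext
      show w₂ ^ (-(n:ℤ)) * (w₂⁻¹ * ↑k * w₂) * (w₂ ^ (-(n:ℤ)))⁻¹
          = w₂ ^ (-(n:ℤ)+-1) * ↑k * (w₂ ^ (-(n:ℤ)+-1))⁻¹
      group

/-- The action of `ℤ` on `ker φ₁ ∗ ker φ₂`. -/
def bbAct : Multiplicative ℤ →* MulAut (Coprod φ₁.ker φ₂.ker) :=
  zpowersHom _ (bbAut φ₁ φ₂ w₁ w₂)

/-- The semidirect product `(ker φ₁ ∗ ker φ₂) ⋊ ℤ`. -/
abbrev bbSD := SemidirectProduct (Coprod φ₁.ker φ₂.ker) (Multiplicative ℤ)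
    (bbAct φ₁ φ₂ w₁ w₂)

variable (hw₁ : φ₁ w₁ = ofAdd 1) (hw₂ : φ₂ w₂ = ofAdd 1)

lemma bbF_mem (hw₁ : φ₁ w₁ = ofAdd 1) (a : A₁) :
    a * w₁ ^ (-(φ₁ a).toAdd) ∈ φ₁.ker := by
  simp only [MonoidHom.mem_ker, map_mul, map_zpow, hw₁]
  rw [← ofAdd_zsmul]
  simp

/-- The homomorphism `A₁ →* (ker φ₁ ∗ ker φ₂) ⋊ ℤ`, `a ↦ (a w₁^{-φ₁ a}, φ₁ a)`. -/
def bbF₁ : A₁ →* bbSD φ₁ φ₂ w₁ w₂ where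
  toFun a := ⟨Coprod.inl ⟨a * w₁ ^ (-(φ₁ a).toAdd), bbF_mem φ₁ w₁ hw₁ a⟩, φ₁ a⟩
  map_one' := by
    ext
    · show Coprod.inl _ = 1
      have h : (⟨(1:A₁) * w₁ ^ (-(φ₁ (1:A₁)).toAdd), bbF_mem φ₁ w₁ hw₁ 1⟩ : φ₁.ker) = 1 := by
        ext; simp
      rw [h, map_one]
    · simp
  map_mul' a b := by
    ext
    · show Coprod.inl _ = Coprod.inl _ * (bbAct φ₁ φ₂ w₁ w₂ (φ₁ a)) (Coprod.inl _)
      rw [show bbAct φ₁ φ₂ w₁ w₂ (φ₁ a) = (bbAut φ₁ φ₂ w₁ w₂) ^ ((φ₁ a).toAdd) from rfl]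
      rw [bbAut_zpow_inl, ← map_mul]
      congr 1
      ext
      show (a*b) * w₁ ^ (-(φ₁ (a*b)).toAdd)
          = a * w₁ ^ (-(φ₁ a).toAdd) * (w₁ ^ ((φ₁ a).toAdd) * (b * w₁ ^ (-(φ₁ b).toAdd)) * (w₁ ^ ((φ₁ a).toAdd))⁻¹)
      rw [map_mul, toAdd_mul, neg_add]
      group
    · simp

/-- The homomorphism `A₂ →* (ker φ₁ ∗ ker φ₂) ⋊ ℤ`, `a ↦ (a w₂^{-φ₂ a}, φ₂ a)`. -/
def bbF₂ : A₂ →* bbSD φ₁ φ₂ w₁ w₂ where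
  toFun a := ⟨Coprod.inr ⟨a * w₂ ^ (-(φ₂ a).toAdd), bbF_mem φ₂ w₂ hw₂ a⟩, φ₂ a⟩
  map_one' := by
    ext
    · show Coprod.inr _ = 1
      have h : (⟨(1:A₂) * w₂ ^ (-(φ₂ (1:A₂)).toAdd), bbF_mem φ₂ w₂ hw₂ 1⟩ : φ₂.ker) = 1 := by
        ext; simp
      rw [h, map_one]
    · simp
  map_mul' a b := by
    ext
    · show Coprod.inr _ = Coprod.inr _ * (bbAct φ₁ φ₂ w₁ w₂ (φ₂ a)) (Coprod.inr _)
      rw [show bbAct φ₁ φ₂ w₁ w₂ (φ₂ a) = (bbAut φ₁ φ₂ w₁ w₂) ^ ((φ₂ a).toAdd) from rfl]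
      rw [bbAut_zpow_inr, ← map_mul]
      congr 1
      ext
      show (a*b) * w₂ ^ (-(φ₂ (a*b)).toAdd)
          = a * w₂ ^ (-(φ₂ a).toAdd) * (w₂ ^ ((φ₂ a).toAdd) * (b * w₂ ^ (-(φ₂ b).toAdd)) * (w₂ ^ ((φ₂ a).toAdd))⁻¹)
      rw [map_mul, toAdd_mul, neg_add]
      group
    · simp

lemma bbF₁_apply (a : A₁) : bbF₁ φ₁ φ₂ w₁ w₂ hw₁ a
    = ⟨Coprod.inl ⟨a * w₁ ^ (-(φ₁ a).toAdd), bbF_mem φ₁ w₁ hw₁ a⟩, φ₁ a⟩ := rfl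

lemma bbF₂_apply (a : A₂) : bbF₂ φ₁ φ₂ w₁ w₂ hw₂ a
    = ⟨Coprod.inr ⟨a * w₂ ^ (-(φ₂ a).toAdd), bbF_mem φ₂ w₂ hw₂ a⟩, φ₂ a⟩ := rfl

lemma bbF₁_w : bbF₁ φ₁ φ₂ w₁ w₂ hw₁ w₁ = SemidirectProduct.inr (ofAdd 1) := by
  have h : (⟨w₁ * w₁ ^ (-(φ₁ w₁).toAdd), bbF_mem φ₁ w₁ hw₁ w₁⟩ : φ₁.ker) = 1 := by
    ext
    show w₁ * w₁ ^ (-(φ₁ w₁).toAdd) = 1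
    rw [hw₁]
    simp
  ext
  · show Coprod.inl _ = _
    rw [h, map_one]
    simp
  · show φ₁ w₁ = _
    rw [hw₁]
    rfl

lemma bbF₂_w : bbF₂ φ₁ φ₂ w₁ w₂ hw₂ w₂ = SemidirectProduct.inr (ofAdd 1) := by
  have h : (⟨w₂ * w₂ ^ (-(φ₂ w₂).toAdd), bbF_mem φ₂ w₂ hw₂ w₂⟩ : φ₂.ker) = 1 := by
    ext
    show w₂ * w₂ ^ (-(φ₂ w₂).toAdd) = 1
    rw [hw₂]
    simp
  ext
  · show Coprod.inr _ = _
    rw [h, map_one]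
    simp
  · show φ₂ w₂ = _
    rw [hw₂]
    rfl

lemma bbF₁_ker (k : φ₁.ker) :
    bbF₁ φ₁ φ₂ w₁ w₂ hw₁ ↑k = SemidirectProduct.inl (Coprod.inl k) := by
  have hk : φ₁ ↑k = 1 := k.2
  ext
  · show Coprod.inl _ = Coprod.inl k
    congr 1
    ext
    show ↑k * w₁ ^ (-(φ₁ ↑k).toAdd) = ↑k
    rw [hk]
    simp
  · show φ₁ ↑k = 1
    exact hk

lemma bbF₂_ker (k : φ₂.ker) :
    bbF₂ φ₁ φ₂ w₁ w₂ hw₂ ↑k = SemidirectProduct.inl (Coprod.inr k) := by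
  have hk : φ₂ ↑k = 1 := k.2
  ext
  · show Coprod.inr _ = Coprod.inr k
    congr 1
    ext
    show ↑k * w₂ ^ (-(φ₂ ↑k).toAdd) = ↑k
    rw [hk]
    simp
  · show φ₂ ↑k = 1
    exact hk

variable {A : Type*} [Group A] (ι₁ : A₁ →* A) (ι₂ : A₂ →* A) (w : A)

lemma bbPhi_compat (hι₁ : ι₁ w₁ = w) (hι₂ : ι₂ w₂ = w) :
    ∀ g : Multiplicative ℤ,
      (Coprod.lift (ι₁.comp φ₁.ker.subtype) (ι₂.comp φ₂.ker.subtype)).comp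
          (bbAct φ₁ φ₂ w₁ w₂ g).toMonoidHom
        = (MulAut.conj (zpowersHom A w g)).toMonoidHom.comp
          (Coprod.lift (ι₁.comp φ₁.ker.subtype) (ι₂.comp φ₂.ker.subtype)) := by
  intro g
  apply Coprod.hom_ext
  · ext k
    show Coprod.lift _ _ ((bbAut φ₁ φ₂ w₁ w₂ ^ g.toAdd) (Coprod.inl k)) = _
    rw [bbAut_zpow_inl, Coprod.lift_apply_inl]
    show ι₁ (w₁ ^ g.toAdd * ↑k * (w₁ ^ g.toAdd)⁻¹) = _
    rw [map_mul, map_mul, map_inv, map_zpow, hι₁]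
    rfl
  · ext k
    show Coprod.lift _ _ ((bbAut φ₁ φ₂ w₁ w₂ ^ g.toAdd) (Coprod.inr k)) = _
    rw [bbAut_zpow_inr, Coprod.lift_apply_inr]
    show ι₂ (w₂ ^ g.toAdd * ↑k * (w₂ ^ g.toAdd)⁻¹) = _
    rw [map_mul, map_mul, map_inv, map_zpow, hι₂]
    rfl

/-- The homomorphism `(ker φ₁ ∗ ker φ₂) ⋊ ℤ →* A` induced by `ι₁, ι₂` and `t ↦ w`. -/
def bbPhi (hι₁ : ι₁ w₁ = w) (hι₂ : ι₂ w₂ = w) : bbSD φ₁ φ₂ w₁ w₂ →* A :=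
  SemidirectProduct.lift (Coprod.lift (ι₁.comp φ₁.ker.subtype) (ι₂.comp φ₂.ker.subtype))
    (zpowersHom A w) (bbPhi_compat φ₁ φ₂ w₁ w₂ ι₁ ι₂ w hι₁ hι₂)

lemma bbPhi_comp_F₁ (hι₁ : ι₁ w₁ = w) (hι₂ : ι₂ w₂ = w) :
    (bbPhi φ₁ φ₂ w₁ w₂ ι₁ ι₂ w hι₁ hι₂).comp (bbF₁ φ₁ φ₂ w₁ w₂ hw₁) = ι₁ := by
  ext a
  show bbPhi φ₁ φ₂ w₁ w₂ ι₁ ι₂ w hι₁ hι₂ (bbF₁ φ₁ φ₂ w₁ w₂ hw₁ a) = ι₁ a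
  rw [bbF₁_apply, ← SemidirectProduct.inl_left_mul_inr_right
    (⟨Coprod.inl ⟨a * w₁ ^ (-(φ₁ a).toAdd), bbF_mem φ₁ w₁ hw₁ a⟩, φ₁ a⟩ : bbSD φ₁ φ₂ w₁ w₂)]
  rw [map_mul]
  show bbPhi φ₁ φ₂ w₁ w₂ ι₁ ι₂ w hι₁ hι₂ (SemidirectProduct.inl (Coprod.inl _)) *
      bbPhi φ₁ φ₂ w₁ w₂ ι₁ ι₂ w hι₁ hι₂ (SemidirectProduct.inr (φ₁ a)) = ι₁ a
  rw [bbPhi, SemidirectProduct.lift_inl, SemidirectProduct.lift_inr, Coprod.lift_apply_inl]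
  show ι₁ (a * w₁ ^ (-(φ₁ a).toAdd)) * zpowersHom A w (φ₁ a) = ι₁ a
  rw [map_mul, map_zpow, hι₁, zpowersHom_apply]
  group

lemma bbPhi_comp_F₂ (hι₁ : ι₁ w₁ = w) (hι₂ : ι₂ w₂ = w) :
    (bbPhi φ₁ φ₂ w₁ w₂ ι₁ ι₂ w hι₁ hι₂).comp (bbF₂ φ₁ φ₂ w₁ w₂ hw₂) = ι₂ := by
  ext a
  show bbPhi φ₁ φ₂ w₁ w₂ ι₁ ι₂ w hι₁ hι₂ (bbF₂ φ₁ φ₂ w₁ w₂ hw₂ a) = ι₂ a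
  rw [bbF₂_apply, ← SemidirectProduct.inl_left_mul_inr_right
    (⟨Coprod.inr ⟨a * w₂ ^ (-(φ₂ a).toAdd), bbF_mem φ₂ w₂ hw₂ a⟩, φ₂ a⟩ : bbSD φ₁ φ₂ w₁ w₂)]
  rw [map_mul]
  show bbPhi φ₁ φ₂ w₁ w₂ ι₁ ι₂ w hι₁ hι₂ (SemidirectProduct.inl (Coprod.inr _)) *
      bbPhi φ₁ φ₂ w₁ w₂ ι₁ ι₂ w hι₁ hι₂ (SemidirectProduct.inr (φ₂ a)) = ι₂ a
  rw [bbPhi, SemidirectProduct.lift_inl, SemidirectProduct.lift_inr, Coprod.lift_apply_inr]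
  show ι₂ (a * w₂ ^ (-(φ₂ a).toAdd)) * zpowersHom A w (φ₂ a) = ι₂ a
  rw [map_mul, map_zpow, hι₂, zpowersHom_apply]
  group

theorem bb_generic (hι₁ : ι₁ w₁ = w) (hι₂ : ι₂ w₂ = w)
    (φ : A →* Multiplicative ℤ) (Θ : A →* bbSD φ₁ φ₂ w₁ w₂)
    (hΘ₁ : Θ.comp ι₁ = bbF₁ φ₁ φ₂ w₁ w₂ hw₁)
    (hΘ₂ : Θ.comp ι₂ = bbF₂ φ₁ φ₂ w₁ w₂ hw₂)
    (hΦΘ : (bbPhi φ₁ φ₂ w₁ w₂ ι₁ ι₂ w hι₁ hι₂).comp Θ = MonoidHom.id A)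
    (hφ : φ = (SemidirectProduct.rightHom).comp Θ) :
    Nonempty (φ.ker ≃* Coprod φ₁.ker φ₂.ker) := by
  have hΘΦ : Θ.comp (bbPhi φ₁ φ₂ w₁ w₂ ι₁ ι₂ w hι₁ hι₂) = MonoidHom.id _ := by
    apply SemidirectProduct.hom_ext
    · apply Coprod.hom_ext
      · refine MonoidHom.ext fun k => ?_
        show Θ (bbPhi φ₁ φ₂ w₁ w₂ ι₁ ι₂ w hι₁ hι₂ (SemidirectProduct.inl (Coprod.inl k))) = _
        rw [bbPhi, SemidirectProduct.lift_inl, Coprod.lift_apply_inl]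
        show Θ (ι₁ ↑k) = _
        rw [← MonoidHom.comp_apply, hΘ₁, bbF₁_ker]
        rfl
      · refine MonoidHom.ext fun k => ?_
        show Θ (bbPhi φ₁ φ₂ w₁ w₂ ι₁ ι₂ w hι₁ hι₂ (SemidirectProduct.inl (Coprod.inr k))) = _
        rw [bbPhi, SemidirectProduct.lift_inl, Coprod.lift_apply_inr]
        show Θ (ι₂ ↑k) = _
        rw [← MonoidHom.comp_apply, hΘ₂, bbF₂_ker]
        rfl
    · apply MonoidHom.ext_mint
      show Θ (bbPhi φ₁ φ₂ w₁ w₂ ι₁ ι₂ w hι₁ hι₂ (SemidirectProduct.inr (ofAdd 1))) = _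
      rw [bbPhi, SemidirectProduct.lift_inr, zpowersHom_apply]
      show Θ (w ^ (1:ℤ)) = _
      rw [zpow_one, ← hι₁, ← MonoidHom.comp_apply, hΘ₁, bbF₁_w]
      rfl
  let E : A ≃* bbSD φ₁ φ₂ w₁ w₂ :=
    MonoidHom.toMulEquiv Θ (bbPhi φ₁ φ₂ w₁ w₂ ι₁ ι₂ w hι₁ hι₂) hΦΘ hΘΦ
  have hE : (E : A →* bbSD φ₁ φ₂ w₁ w₂) = Θ := MonoidHom.ext fun x => rfl
  have hmap : Subgroup.map (E : A →* bbSD φ₁ φ₂ w₁ w₂) φ.ker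
      = (SemidirectProduct.rightHom (φ := bbAct φ₁ φ₂ w₁ w₂)).ker := by
    rw [hE, hφ, ← MonoidHom.comap_ker]
    exact Subgroup.map_comap_eq_self_of_surjective
      (MulEquiv.surjective E) _
  exact ⟨(MulEquiv.subgroupMap E φ.ker).trans <|
    (MulEquiv.subgroupCongr hmap).trans <|
    (MulEquiv.subgroupCongr (SemidirectProduct.range_inl_eq_ker_rightHom).symm).trans <|
    (MonoidHom.ofInjective SemidirectProduct.inl_injective).symm⟩

end Generic


/-- If a finite connected simplicial graph `Γ` has a cut-vertex `v`, with
`Γ ∖ {v} = V₁ ⊔ V₂` and no edges between `V₁` and `V₂`, then the Bestvina–Brady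
group `H_Γ` is isomorphic to the free product `H_{Γ₁} ∗ H_{Γ₂}`, where `Γᵢ` is the
induced subgraph on `Vᵢ ∪ {v}`. -/
theorem bb_cut_vertex_free_product {V : Type*} [Fintype V] (G : SimpleGraph V)
    (hconn : G.Connected) (v : V) (V₁ V₂ : Set V)
    (h1 : V₁.Nonempty) (h2 : V₂.Nonempty) (hdisj : Disjoint V₁ V₂)
    (hcover : V₁ ∪ V₂ = ({v}ᶜ : Set V))
    (hnoedge : ∀ a ∈ V₁, ∀ b ∈ V₂, ¬ G.Adj a b) :
    Nonempty ((bbHom G).ker ≃*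
      Monoid.Coprod ((bbHom (G.induce (V₁ ∪ {v}))).ker)
        ((bbHom (G.induce (V₂ ∪ {v}))).ker)) := by
  classical
  have hv1 : v ∈ V₁ ∪ {v} := Set.mem_union_right _ rfl
  have hv2 : v ∈ V₂ ∪ {v} := Set.mem_union_right _ rfl
  have tricho : ∀ u : V, u ∈ V₁ ∨ u ∈ V₂ ∨ u = v := by
    intro u
    by_cases h : u = v
    · right; right; exact h
    · have hu : u ∈ V₁ ∪ V₂ := by
        rw [hcover]
        exact h
      rcases hu with hu | hu
      · exact Or.inl hu
      · exact Or.inr (Or.inl hu)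
  set φ₁ := bbHom (G.induce (V₁ ∪ {v})) with hφ₁def
  set φ₂ := bbHom (G.induce (V₂ ∪ {v})) with hφ₂def
  set w₁ : RAAG (G.induce (V₁ ∪ {v})) := PresentedGroup.of ⟨v, hv1⟩ with hw₁def
  set w₂ : RAAG (G.induce (V₂ ∪ {v})) := PresentedGroup.of ⟨v, hv2⟩ with hw₂def
  have hw₁ : φ₁ w₁ = ofAdd (1:ℤ) := bbHom_of _ _
  have hw₂ : φ₂ w₂ = ofAdd (1:ℤ) := bbHom_of _ _
  have mem₂ : ∀ u : V, u ∉ V₁ ∪ {v} → u ∈ V₂ ∪ {v} := by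
    intro u h
    rcases tricho u with h' | h' | h'
    · exact absurd (Set.mem_union_left _ h') h
    · exact Set.mem_union_left _ h'
    · exact absurd (h' ▸ hv1) h
  set f : V → bbSD φ₁ φ₂ w₁ w₂ := fun u =>
    if h : u ∈ V₁ ∪ {v}
    then bbF₁ φ₁ φ₂ w₁ w₂ hw₁ (PresentedGroup.of ⟨u, h⟩)
    else bbF₂ φ₁ φ₂ w₁ w₂ hw₂ (PresentedGroup.of ⟨u, mem₂ u h⟩) with hfdef
  have hfval₁ : ∀ (u : V) (h : u ∈ V₁ ∪ {v}),
      f u = bbF₁ φ₁ φ₂ w₁ w₂ hw₁ (PresentedGroup.of ⟨u, h⟩) := by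
    intro u h
    simp only [hfdef]
    rw [dif_pos h]
  have hfval₂ : ∀ (u : V) (h2 : u ∈ V₂ ∪ {v}),
      f u = bbF₂ φ₁ φ₂ w₁ w₂ hw₂ (PresentedGroup.of ⟨u, h2⟩) := by
    intro u h2
    by_cases h : u ∈ V₁ ∪ {v}
    · have huv : u = v := by
        rcases h with h | h
        · rcases h2 with h2 | h2
          · exact absurd h2 (Set.disjoint_left.mp hdisj h)
          · exact h2
        · exact h
      subst huv
      rw [hfval₁ u hv1]
      show bbF₁ φ₁ φ₂ w₁ w₂ hw₁ w₁ = bbF₂ φ₁ φ₂ w₁ w₂ hw₂ w₂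
      rw [bbF₁_w, bbF₂_w]
    · simp only [hfdef]
      rw [dif_neg h]
  have hrel : ∀ r ∈ raagRels G, FreeGroup.lift f r = 1 := by
    rintro r ⟨a, b, hab, rfl⟩
    suffices hc : f a * f b = f b * f a by
      simp only [map_mul, map_inv, FreeGroup.lift_apply_of]
      rw [mul_inv_eq_one, mul_inv_eq_iff_eq_mul]
      exact hc
    have hcase : (a ∈ V₁ ∪ {v} ∧ b ∈ V₁ ∪ {v}) ∨ (a ∈ V₂ ∪ {v} ∧ b ∈ V₂ ∪ {v}) := by
      rcases tricho a with ha | ha | ha <;> rcases tricho b with hb | hb | hb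
      · exact Or.inl ⟨Set.mem_union_left _ ha, Set.mem_union_left _ hb⟩
      · exact absurd hab (hnoedge a ha b hb)
      · exact Or.inl ⟨Set.mem_union_left _ ha, hb ▸ hv1⟩
      · exact absurd hab.symm (hnoedge b hb a ha)
      · exact Or.inr ⟨Set.mem_union_left _ ha, Set.mem_union_left _ hb⟩
      · exact Or.inr ⟨Set.mem_union_left _ ha, hb ▸ hv2⟩
      · exact Or.inl ⟨ha ▸ hv1, Set.mem_union_left _ hb⟩
      · exact Or.inr ⟨ha ▸ hv2, Set.mem_union_left _ hb⟩
      · exact absurd (ha.trans hb.symm) hab.ne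
    rcases hcase with ⟨ha, hb⟩ | ⟨ha, hb⟩
    · rw [hfval₁ a ha, hfval₁ b hb, ← map_mul, ← map_mul]
      congr 1
      exact raag_adj_comm (G.induce (V₁ ∪ {v})) (a := ⟨a, ha⟩) (b := ⟨b, hb⟩) hab
    · rw [hfval₂ a ha, hfval₂ b hb, ← map_mul, ← map_mul]
      congr 1
      exact raag_adj_comm (G.induce (V₂ ∪ {v})) (a := ⟨a, ha⟩) (b := ⟨b, hb⟩) hab
  have hΘof : ∀ u : V, PresentedGroup.toGroup hrel (PresentedGroup.of u) = f u :=
    fun u => PresentedGroup.toGroup.of hrel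
  have hι₁ : iotaS G (V₁ ∪ {v}) w₁ = PresentedGroup.of v := iotaS_of G (V₁ ∪ {v}) ⟨v, hv1⟩
  have hι₂ : iotaS G (V₂ ∪ {v}) w₂ = PresentedGroup.of v := iotaS_of G (V₂ ∪ {v}) ⟨v, hv2⟩
  have hΘ₁ : (PresentedGroup.toGroup hrel).comp (iotaS G (V₁ ∪ {v}))
      = bbF₁ φ₁ φ₂ w₁ w₂ hw₁ := by
    apply PresentedGroup.ext
    intro x
    rw [MonoidHom.comp_apply, iotaS_of, hΘof, hfval₁ ↑x x.2]
  have hΘ₂ : (PresentedGroup.toGroup hrel).comp (iotaS G (V₂ ∪ {v}))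
      = bbF₂ φ₁ φ₂ w₁ w₂ hw₂ := by
    apply PresentedGroup.ext
    intro x
    rw [MonoidHom.comp_apply, iotaS_of, hΘof, hfval₂ ↑x x.2]
  have hΦΘ : (bbPhi φ₁ φ₂ w₁ w₂ (iotaS G (V₁ ∪ {v})) (iotaS G (V₂ ∪ {v}))
      (PresentedGroup.of v) hι₁ hι₂).comp (PresentedGroup.toGroup hrel)
      = MonoidHom.id (RAAG G) := by
    apply PresentedGroup.ext
    intro u
    rw [MonoidHom.comp_apply, hΘof, MonoidHom.id_apply]
    by_cases h : u ∈ V₁ ∪ {v}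
    · rw [hfval₁ u h, ← MonoidHom.comp_apply, bbPhi_comp_F₁, iotaS_of]
    · rw [hfval₂ u (mem₂ u h), ← MonoidHom.comp_apply, bbPhi_comp_F₂, iotaS_of]
  have hφ : bbHom G = (SemidirectProduct.rightHom).comp (PresentedGroup.toGroup hrel) := by
    apply PresentedGroup.ext
    intro u
    rw [MonoidHom.comp_apply, hΘof, bbHom_of]
    by_cases h : u ∈ V₁ ∪ {v}
    · rw [hfval₁ u h, bbF₁_apply]
      show ofAdd (1:ℤ) = φ₁ (PresentedGroup.of ⟨u, h⟩)
      rw [bbHom_of]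
    · rw [hfval₂ u (mem₂ u h), bbF₂_apply]
      show ofAdd (1:ℤ) = φ₂ (PresentedGroup.of ⟨u, mem₂ u h⟩)
      rw [bbHom_of]
  exact bb_generic φ₁ φ₂ w₁ w₂ hw₁ hw₂ (iotaS G (V₁ ∪ {v})) (iotaS G (V₂ ∪ {v}))
    (PresentedGroup.of v) hι₁ hι₂ (bbHom G) (PresentedGroup.toGroup hrel) hΘ₁ hΘ₂ hΦΘ hφ
end
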